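/- Let G be a group having a nontrivial element a₀ with finite conjugacy class C = {c⁻¹a₀c : c ∈ G}. Then the operator A = ∑_{d∈C} U_d on c₀(G,K) commutes with all U_g and all V_g (g ∈ G) but is not a scalar multiple of the identity. In particular, the algebra generated by the right regular representation has nontrivial center. -/

import Mathlib

set_option linter.unusedSectionVars false

open ZeroAtInfty Filter

noncomputable section

variable {J : Type*} [TopologicalSpace J] [DiscreteTopology J]
variable {K : Type*} [NontriviallyNormedField K]

/-- The standard basis vector `δ_j` in `c₀(J, K)` (the indicator function of `j`). -/
def delta (j : J) : C₀(J, K) :=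
  letI := Classical.decEq J
  ⟨⟨fun i => if i = j then (1 : K) else 0, continuous_of_discreteTopology⟩, by
    refine Tendsto.congr' ?_ tendsto_const_nhds
    rw [cocompact_eq_cofinite]
    filter_upwards [(Set.finite_singleton j).compl_mem_cofinite] with i hi
    simp only [Set.mem_compl_iff, Set.mem_singleton_iff] at hi
    simp [hi]⟩

lemma c0_norm_apply_le (x : C₀(J, K)) (i : J) : ‖x i‖ ≤ ‖x‖ := by
  rw [← ZeroAtInftyContinuousMap.norm_toBCF_eq_norm]
  exact x.toBCF.norm_coe_le_norm i

lemma c0_norm_le_of_forall {x : C₀(J, K)} {C : ℝ} (hC : 0 ≤ C) (h : ∀ i, ‖x i‖ ≤ C) :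
    ‖x‖ ≤ C := by
  rw [← ZeroAtInftyContinuousMap.norm_toBCF_eq_norm]
  exact (BoundedContinuousFunction.norm_le hC).2 h

/-- Precomposition with a bijection of the (discrete) index set, as a continuous
linear operator on `c₀(J, K)`. -/
def precompCLM (σ : J ≃ J) : C₀(J, K) →L[K] C₀(J, K) :=
  LinearMap.mkContinuous
    (ZeroAtInftyContinuousMap.compLinearMap
      (⟨⟨σ, continuous_of_discreteTopology⟩, by
          simpa [cocompact_eq_cofinite] using σ.injective.tendsto_cofinite⟩ : CocompactMap J J))
    1
    (fun f => by
      rw [one_mul]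
      exact c0_norm_le_of_forall (norm_nonneg f) fun i => c0_norm_apply_le f (σ i))

@[simp] lemma precompCLM_apply (σ : J ≃ J) (f : C₀(J, K)) (i : J) :
    precompCLM σ f i = f (σ i) := rfl

variable {G : Type*} [Group G] [TopologicalSpace G] [DiscreteTopology G]

/-- The right regular representation: `(U_g x)_a = x_{a g}`. -/
def U (g : G) : C₀(G, K) →L[K] C₀(G, K) := precompCLM (Equiv.mulRight g)

/-- The left regular representation: `(V_g x)_a = x_{g⁻¹ a}`. -/
def V (g : G) : C₀(G, K) →L[K] C₀(G, K) := precompCLM (Equiv.mulLeft g⁻¹)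

/-- The flip operator `(W x)_a = x_{a⁻¹}`. -/
def Wop : C₀(G, K) →L[K] C₀(G, K) := precompCLM (Equiv.inv G)

end


section Aux
variable {K : Type*} [NontriviallyNormedField K]
variable {G : Type*} [Group G] [TopologicalSpace G] [DiscreteTopology G]

lemma U_comp_U (d g : G) :
    (U d : C₀(G, K) →L[K] C₀(G, K)).comp (U g) = U (d * g) := by
  apply ContinuousLinearMap.ext; intro x
  apply ZeroAtInftyContinuousMap.ext; intro a
  simp [U, mul_assoc]

lemma U_comp_V (d g : G) :
    (U d : C₀(G, K) →L[K] C₀(G, K)).comp (V g) = (V g).comp (U d) := by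
  apply ContinuousLinearMap.ext; intro x
  apply ZeroAtInftyContinuousMap.ext; intro a
  simp [U, V, mul_assoc]

lemma c0_sum_apply {J : Type*} [TopologicalSpace J] [DiscreteTopology J]
    {ι : Type*} (s : Finset ι) (f : ι → C₀(J, K)) (a : J) :
    (∑ i ∈ s, f i) a = ∑ i ∈ s, f i a := by
  classical
  induction s using Finset.induction with
  | empty => simp
  | insert _ _ h ih => simp [Finset.sum_insert h, ih]

end Aux

open ZeroAtInfty Filter

/-- If `G` has a nontrivial element `a₀` with finite conjugacy class
`C`, then the finite sum `A = ∑_{d ∈ C} U_d` commutes with all `U_g` and all `V_g`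
but is not a scalar multiple of the identity (so the algebra generated by the right
regular representation has nontrivial center). -/
theorem finite_class_gives_central_element
    {K : Type*} [NontriviallyNormedField K]
    {G : Type*} [Group G] [TopologicalSpace G] [DiscreteTopology G]
    (a₀ : G) (ha₀ : a₀ ≠ 1)
    (hC : {x : G | ∃ c : G, x = c⁻¹ * a₀ * c}.Finite) :
    (∀ g : G, (∑ d ∈ hC.toFinset, (U d : C₀(G, K) →L[K] C₀(G, K))).comp (U g) =
        (U g).comp (∑ d ∈ hC.toFinset, U d)) ∧
    (∀ g : G, (∑ d ∈ hC.toFinset, (U d : C₀(G, K) →L[K] C₀(G, K))).comp (V g) =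
        (V g).comp (∑ d ∈ hC.toFinset, U d)) ∧
    ¬ ∃ c : K, (∑ d ∈ hC.toFinset, (U d : C₀(G, K) →L[K] C₀(G, K))) =
        c • ContinuousLinearMap.id K (C₀(G, K)) := by
  classical
  have hmem : ∀ x, x ∈ hC.toFinset ↔ ∃ c : G, x = c⁻¹ * a₀ * c := by
    intro x; simp [Set.Finite.mem_toFinset]
  refine ⟨?_, ?_, ?_⟩
  · intro g
    rw [ContinuousLinearMap.finset_sum_comp, ContinuousLinearMap.comp_finset_sum]
    simp only [U_comp_U]
    refine Finset.sum_nbij' (fun d => g⁻¹ * d * g) (fun d => g * d * g⁻¹) ?_ ?_ ?_ ?_ ?_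
    · intro d hd
      rcases (hmem d).1 hd with ⟨c, rfl⟩
      exact (hmem _).2 ⟨c * g, by group⟩
    · intro d hd
      rcases (hmem d).1 hd with ⟨c, rfl⟩
      exact (hmem _).2 ⟨c * g⁻¹, by group⟩
    · intro d _; group
    · intro d _; group
    · intro d _; congr 1; group
  · intro g
    rw [ContinuousLinearMap.finset_sum_comp, ContinuousLinearMap.comp_finset_sum]
    exact Finset.sum_congr rfl fun d _ => U_comp_V d g
  · rintro ⟨c, hc⟩
    have ha₀C : a₀ ∈ hC.toFinset := (hmem a₀).2 ⟨1, by group⟩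
    have h1 : ((∑ d ∈ hC.toFinset, (U d : C₀(G, K) →L[K] C₀(G, K))) (delta 1)) a₀⁻¹
        = 1 := by
      rw [ContinuousLinearMap.sum_apply, c0_sum_apply]
      have hval : ∀ d : G, ((U d : C₀(G, K) →L[K] C₀(G, K)) (delta 1)) a₀⁻¹
          = if d = a₀ then (1 : K) else 0 := by
        intro d
        have : ((U d : C₀(G, K) →L[K] C₀(G, K)) (delta 1)) a₀⁻¹
            = ((delta 1 : C₀(G, K)) (a₀⁻¹ * d)) := rfl
        rw [this]
        simp only [delta, ZeroAtInftyContinuousMap.coe_mk, ContinuousMap.coe_mk]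
        by_cases h : d = a₀
        · simp [h]
        · rw [if_neg h, if_neg]
          intro h'
          exact h (by rwa [inv_mul_eq_one, eq_comm] at h')
      rw [Finset.sum_congr rfl fun d _ => hval d, Finset.sum_ite_eq' _ a₀ (fun _ => (1:K)),
        if_pos ha₀C]
    rw [hc] at h1
    simp only [ContinuousLinearMap.smul_apply, ContinuousLinearMap.id_apply] at h1
    have h2 : ((c • (delta 1 : C₀(G, K))) a₀⁻¹) = c * 0 := by
      have : ((delta 1 : C₀(G, K)) a₀⁻¹) = 0 := by
        simp only [delta, ZeroAtInftyContinuousMap.coe_mk, ContinuousMap.coe_mk]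
        rw [if_neg]
        intro h'
        exact ha₀ (by simpa using congrArg Inv.inv h')
      simp [this]
    rw [h2, mul_zero] at h1
    exact zero_ne_one h1
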